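/- Let Σ₁ = ℂP¹ − ([a₁,a₂] ∪ ⋯ ∪ [a_{2p−1}, a_{2p}]) with 0 < a₁ < ⋯ < a_{2p} real, with compactification Σ̄₁ adding p boundary circles ∂₁Σ̄₁, …, ∂_pΣ̄₁, and let Σ̄₂ be the closed unit disk. Let f : Σ̄₁ → Σ̄₂ be a holomorphic q-fold branched cover with q ≥ p such that f(∂_iΣ̄₁) = ∂Σ̄₂ for all i, f⁻¹(0) = {∞}, and f(0) ∈ ℝ^{≤0} ∩ Σ̄₂. Then f commutes with the anti-holomorphic involutions induced by complex conjugation: f ∘ ι₁ = ι₂ ∘ f; in particular f maps the fixed locus of conjugation on Σ̄₁ into ℝ ∩ Σ̄₂, and f maps the asymptotic marker at ∞ pointing in the negative real direction to the tangent half-line at 0 in the negative real direction. -/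

import Mathlib

open Complex Filter Asymptotics

lemma conjconj_hasDerivAt {f : ℂ → ℂ} {z f' : ℂ}
    (hf : HasDerivAt f f' ((starRingEnd ℂ) z)) :
    HasDerivAt (fun w => (starRingEnd ℂ) (f ((starRingEnd ℂ) w))) ((starRingEnd ℂ) f') z := by
  rw [hasDerivAt_iff_isLittleO] at hf ⊢
  have hconj : Tendsto (fun w : ℂ => (starRingEnd ℂ) w) (nhds z) (nhds ((starRingEnd ℂ) z)) :=
    (Complex.continuous_conj.tendsto z)
  have h2 := hf.comp_tendsto hconj
  have heq : (fun w : ℂ => (starRingEnd ℂ) (f ((starRingEnd ℂ) w)) -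
        (starRingEnd ℂ) (f ((starRingEnd ℂ) z)) - (w - z) • (starRingEnd ℂ) f')
      = fun w : ℂ => (starRingEnd ℂ)
        (f ((starRingEnd ℂ) w) - f ((starRingEnd ℂ) z) - ((starRingEnd ℂ) w - (starRingEnd ℂ) z) • f') := by
    funext w
    simp only [smul_eq_mul, map_sub, map_mul, Complex.conj_conj]
  rw [heq]
  calc (fun w : ℂ => (starRingEnd ℂ)
        (f ((starRingEnd ℂ) w) - f ((starRingEnd ℂ) z) - ((starRingEnd ℂ) w - (starRingEnd ℂ) z) • f'))
      =O[nhds z] (fun w : ℂ =>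
        f ((starRingEnd ℂ) w) - f ((starRingEnd ℂ) z) - ((starRingEnd ℂ) w - (starRingEnd ℂ) z) • f') := by
        apply isBigO_of_le
        intro w
        exact le_of_eq (RCLike.norm_conj _)
    _ =o[nhds z] (fun w : ℂ => (starRingEnd ℂ) w - (starRingEnd ℂ) z) := h2
    _ =O[nhds z] (fun w : ℂ => w - z) := by
        apply isBigO_of_le
        intro w
        rw [← map_sub]
        exact le_of_eq (RCLike.norm_conj _)

lemma compl_pathconn {S : Set ℂ} (h : ∀ z ∈ S, z.im = 0 ∧ 0 < z.re) :
    IsPreconnected Sᶜ := by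
  have hm1 : (-1 : ℂ) ∈ Sᶜ := by
    intro hmem
    have := (h _ hmem).2
    simp at this
    linarith
  have hseg : ∀ x y : ℂ, segment ℝ x y ⊆ Sᶜ → JoinedIn Sᶜ x y := by
    intro x y hsub
    exact JoinedIn.mono
      (((convex_segment x y).isPathConnected ⟨x, left_mem_segment ℝ x y⟩).joinedIn
        x (left_mem_segment ℝ x y) y (right_mem_segment ℝ x y)) hsub
  have him : ∀ t : ℝ, ∀ x y : ℂ, ((1 - t) • x + t • y).im = (1 - t) * x.im + t * y.im := by
    intro t x y
    simp [Complex.add_im, Complex.smul_im]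
  have hre : ∀ t : ℝ, ∀ x y : ℂ, ((1 - t) • x + t • y).re = (1 - t) * x.re + t * y.re := by
    intro t x y
    simp [Complex.add_re, Complex.smul_re]
  have hup : ∀ z : ℂ, z.im ≠ 0 → JoinedIn Sᶜ z (-1) := by
    intro z hz
    rcases hz.lt_or_gt with hneg | hpos
    · have h1 : JoinedIn Sᶜ z (-Complex.I) := by
        apply hseg
        rintro u hu hmem
        rw [segment_eq_image] at hu
        obtain ⟨t, ht, rfl⟩ := hu
        have := (h _ hmem).1
        rw [him] at this
        simp at this
        have hA : (1 - t) * z.im ≤ 0 :=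
          mul_nonpos_of_nonneg_of_nonpos (by linarith [ht.2]) hneg.le
        have ht0 : t = 0 := le_antisymm (by linarith) ht.1
        rw [ht0] at this
        simp at this
        linarith
      have h2 : JoinedIn Sᶜ (-Complex.I) (-1) := by
        apply hseg
        rintro u hu hmem
        rw [segment_eq_image] at hu
        obtain ⟨t, ht, rfl⟩ := hu
        have h1' := (h _ hmem).1
        have h2' := (h _ hmem).2
        rw [him] at h1'
        rw [hre] at h2'
        simp at h1' h2'
        nlinarith [ht.1, ht.2]
      exact h1.trans h2
    · have h1 : JoinedIn Sᶜ z Complex.I := by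
        apply hseg
        rintro u hu hmem
        rw [segment_eq_image] at hu
        obtain ⟨t, ht, rfl⟩ := hu
        have := (h _ hmem).1
        rw [him] at this
        simp at this
        have hA : 0 ≤ (1 - t) * z.im :=
          mul_nonneg (by linarith [ht.2]) hpos.le
        have ht0 : t = 0 := le_antisymm (by linarith [ht.1]) ht.1
        rw [ht0] at this
        simp at this
        linarith
      have h2 : JoinedIn Sᶜ Complex.I (-1) := by
        apply hseg
        rintro u hu hmem
        rw [segment_eq_image] at hu
        obtain ⟨t, ht, rfl⟩ := hu
        have h1' := (h _ hmem).1
        have h2' := (h _ hmem).2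
        rw [him] at h1'
        rw [hre] at h2'
        simp at h1' h2'
        nlinarith [ht.1, ht.2]
      exact h1.trans h2
  have main : IsPathConnected Sᶜ := by
    refine ⟨-1, hm1, ?_⟩
    intro z hzc
    by_cases hz : z.im = 0
    · have h1 : JoinedIn Sᶜ z (z + Complex.I) := by
        apply hseg
        rintro u hu hmem
        rw [segment_eq_image] at hu
        obtain ⟨t, ht, rfl⟩ := hu
        have h1' := (h _ hmem).1
        rw [him] at h1'
        simp [hz] at h1'
        subst h1'
        simp at hmem
        exact hzc (by simpa [hz] using hmem)
      have h2 : (z + Complex.I).im ≠ 0 := by simp [hz]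
      exact (h1.trans (hup _ h2)).symm
    · exact (hup z hz).symm
  exact main.isConnected.isPreconnected

theorem stmt10 (p q : ℕ) (hp : 0 < p) (hq : p ≤ q)
    (a b : Fin p → ℝ)
    (hapos : ∀ i, 0 < a i) (hab : ∀ i, a i < b i)
    (horder : ∀ i j : Fin p, i < j → b i < a j)
    (S : Set ℂ)
    (hS : S = {z : ℂ | z.im = 0 ∧ ∃ i, z.re ∈ Set.Icc (a i) (b i)})
    (f : ℂ → ℂ)
    (hhol : DifferentiableOn ℂ f Sᶜ)
    (hdisk : ∀ z ∈ Sᶜ, ‖f z‖ ≤ 1)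
    (hbdry : ∀ z₀ ∈ S, Tendsto (fun z => ‖f z‖) (nhdsWithin z₀ Sᶜ) (nhds 1))
    (hnz : ∀ z ∈ Sᶜ, f z ≠ 0)
    (hinf : Tendsto f (cocompact ℂ) (nhds 0))
    (hcover : ∀ w : ℂ, ‖w‖ < 1 →
      (Sᶜ ∩ f ⁻¹' {w}).Finite ∧ (Sᶜ ∩ f ⁻¹' {w}).ncard ≤ q)
    (hval : (f 0).im = 0 ∧ (f 0).re ≤ 0) :
    (∀ z ∈ Sᶜ, f ((starRingEnd ℂ) z) = (starRingEnd ℂ) (f z)) ∧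
    (∀ x : ℝ, (x : ℂ) ∈ Sᶜ → (f x).im = 0) ∧
    (∀ x : ℝ, x ≤ 0 → (f x).im = 0 ∧ (f x).re < 0) := by
  classical
  have hSprop : ∀ z ∈ S, z.im = 0 ∧ 0 < z.re := by
    intro z hz; rw [hS] at hz
    obtain ⟨h1, i, h2⟩ := hz
    exact ⟨h1, lt_of_lt_of_le (hapos i) h2.1⟩
  have hconn : IsPreconnected Sᶜ := compl_pathconn hSprop
  have hclosed : IsClosed S := by
    rw [hS]
    have heq : {z : ℂ | z.im = 0 ∧ ∃ i, z.re ∈ Set.Icc (a i) (b i)}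
        = ⋃ i, (Complex.im ⁻¹' {0} ∩ Complex.re ⁻¹' Set.Icc (a i) (b i)) := by
      ext z
      simp only [Set.mem_setOf_eq, Set.mem_iUnion, Set.mem_inter_iff, Set.mem_preimage,
        Set.mem_singleton_iff]
      tauto
    rw [heq]
    exact isClosed_iUnion_of_finite fun i =>
      ((isClosed_singleton.preimage Complex.continuous_im).inter
        (isClosed_Icc.preimage Complex.continuous_re))
  have hopen : IsOpen Sᶜ := hclosed.isOpen_compl
  have hmemcompl : ∀ z : ℂ, z.re ≤ 0 → z ∈ Sᶜ := fun z hz hmem =>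
    absurd (hSprop z hmem).2 (not_lt.2 hz)
  have h0mem : (0 : ℂ) ∈ Sᶜ := hmemcompl 0 (by simp)
  have hconjmem : ∀ z : ℂ, z ∈ Sᶜ → (starRingEnd ℂ) z ∈ Sᶜ := by
    intro z hz hmem
    apply hz
    rw [hS] at hmem ⊢
    simp only [Set.mem_setOf_eq, Complex.conj_im, Complex.conj_re, neg_eq_zero] at hmem ⊢
    exact hmem
  have hconjS : ∀ z ∈ S, (starRingEnd ℂ) z = z := fun z hz =>
    Complex.conj_eq_iff_im.2 (hSprop z hz).1
  set g : ℂ → ℂ := fun z => (starRingEnd ℂ) (f ((starRingEnd ℂ) z)) with hgdef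
  have hgd : DifferentiableOn ℂ g Sᶜ := by
    intro z hz
    have hz' := hconjmem z hz
    have hfd : DifferentiableAt ℂ f ((starRingEnd ℂ) z) :=
      (hhol _ hz').differentiableAt (hopen.mem_nhds hz')
    exact ((conjconj_hasDerivAt hfd.hasDerivAt).differentiableAt).differentiableWithinAt
  have hgnz : ∀ z ∈ Sᶜ, g z ≠ 0 := by
    intro z hz h
    have h' : (starRingEnd ℂ) (f ((starRingEnd ℂ) z)) = 0 := h
    exact hnz _ (hconjmem z hz) (by simpa using congrArg (starRingEnd ℂ) h')
  have hgnorm : ∀ z, ‖g z‖ = ‖f ((starRingEnd ℂ) z)‖ := fun z => RCLike.norm_conj _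
  set Q : ℂ → ℂ := fun z => f z / g z with hQdef
  have hQd : DifferentiableOn ℂ Q Sᶜ := hhol.div hgd hgnz
  have hQ0 : Q 0 = 1 := by
    have h1 : (starRingEnd ℂ) (f 0) = f 0 := Complex.conj_eq_iff_im.2 hval.1
    have h2 : g 0 = f 0 := by
      show (starRingEnd ℂ) (f ((starRingEnd ℂ) 0)) = f 0
      rw [map_zero, h1]
    show f 0 / g 0 = 1
    rw [h2, div_self (hnz 0 h0mem)]
  obtain ⟨B, hBpos, hBmem⟩ : ∃ B : ℝ, 0 < B ∧ ∀ z : ℂ, B < ‖z‖ → z ∈ Sᶜ := by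
    refine ⟨1 + ∑ i, |b i|, by positivity, ?_⟩
    intro z hz hmem
    rw [hS] at hmem
    obtain ⟨h1, i, h2⟩ := hmem
    have hnorm : ‖z‖ ≤ |z.re| + |z.im| := Complex.norm_le_abs_re_add_abs_im z
    have habs : |z.re| ≤ |b i| := by
      rw [_root_.abs_of_nonneg (le_trans (hapos i).le h2.1)]
      exact le_trans h2.2 (le_abs_self _)
    have hsum : |b i| ≤ ∑ j, |b j| :=
      Finset.single_le_sum (fun j _ => abs_nonneg (b j)) (Finset.mem_univ i)
    rw [h1] at hnorm
    simp only [abs_zero, add_zero] at hnorm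
    linarith
  set F : ℂ → ℂ := fun w => if w = 0 then 0 else f w⁻¹ with hFdef
  have hinvmem : ∀ w : ℂ, w ≠ 0 → ‖w‖ < B⁻¹ → w⁻¹ ∈ Sᶜ := by
    intro w hw hwB
    apply hBmem
    rw [norm_inv]
    have h1 : 0 < ‖w‖ := norm_pos_iff.2 hw
    have h2 : (B⁻¹)⁻¹ < ‖w‖⁻¹ := by
      apply inv_strictAnti₀ h1 hwB
    rwa [inv_inv] at h2
  have hball : Metric.ball (0 : ℂ) B⁻¹ ∈ nhds 0 := Metric.ball_mem_nhds 0 (by positivity)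
  have hF0 : F 0 = 0 := if_pos rfl
  have hFeval : ∀ w : ℂ, w ≠ 0 → F w = f w⁻¹ := fun w hw => if_neg hw
  have hFdiff : DifferentiableOn ℂ F (Metric.ball 0 B⁻¹) := by
    refine (Complex.differentiableOn_compl_singleton_and_continuousAt_iff hball).1 ⟨?_, ?_⟩
    · intro w hw
      have hwne : w ≠ 0 := by simpa using hw.2
      have hwB : ‖w‖ < B⁻¹ := by
        simpa [Metric.mem_ball, dist_zero_right] using hw.1
      have hmem := hinvmem w hwne hwB
      have hda : DifferentiableAt ℂ (fun v : ℂ => f v⁻¹) w := by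
        have h1 : DifferentiableAt ℂ f w⁻¹ := (hhol _ hmem).differentiableAt (hopen.mem_nhds hmem)
        exact h1.comp w (differentiableAt_inv hwne)
      have hev : F =ᶠ[nhds w] fun v => f v⁻¹ := by
        filter_upwards [isOpen_compl_singleton.mem_nhds
          (by simpa using hwne : w ∈ ({0}ᶜ : Set ℂ))] with v hv
        exact hFeval v (by simpa using hv)
      exact (hda.congr_of_eventuallyEq hev).differentiableWithinAt
    · have h1 : Tendsto F (nhdsWithin 0 {(0 : ℂ)}ᶜ) (nhds 0) := by
        have h2 : Tendsto (fun v : ℂ => f v⁻¹) (nhdsWithin 0 {(0 : ℂ)}ᶜ) (nhds 0) := by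
          apply hinf.comp
          rw [← Metric.cobounded_eq_cocompact]
          exact tendsto_inv₀_nhdsNE_zero
        apply Filter.Tendsto.congr' _ h2
        filter_upwards [self_mem_nhdsWithin] with v hv
        exact (hFeval v (by simpa using hv)).symm
      have h2 : Tendsto F (pure (0 : ℂ)) (nhds 0) := by
        have := tendsto_pure_nhds F 0
        rwa [hF0] at this
      have h3 : Tendsto F (nhdsWithin 0 {(0 : ℂ)}ᶜ ⊔ pure 0) (nhds 0) := tendsto_sup.2 ⟨h1, h2⟩
      rw [nhdsNE_sup_pure] at h3
      rw [ContinuousAt, hF0]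
      exact h3
  have hFan : AnalyticAt ℂ F 0 := hFdiff.analyticAt hball
  have hordne : analyticOrderAt F 0 ≠ ⊤ := by
    intro h
    have hev := analyticOrderAt_eq_top.1 h
    have h1 : ∀ᶠ w : ℂ in nhdsWithin 0 {(0 : ℂ)}ᶜ, F w = 0 ∧ w ∈ Metric.ball (0 : ℂ) B⁻¹ ∧ w ≠ 0 := by
      have ha : ∀ᶠ w : ℂ in nhdsWithin 0 {(0 : ℂ)}ᶜ, F w = 0 ∧ w ∈ Metric.ball (0 : ℂ) B⁻¹ := by
        apply eventually_nhdsWithin_of_eventually_nhds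
        filter_upwards [hev, hball] with w hw1 hw2
        exact ⟨hw1, hw2⟩
      have hb : ∀ᶠ w : ℂ in nhdsWithin 0 {(0 : ℂ)}ᶜ, w ∈ ({(0 : ℂ)}ᶜ : Set ℂ) := self_mem_nhdsWithin
      filter_upwards [ha, hb] with w hw1 hw2
      exact ⟨hw1.1, hw1.2, by simpa using hw2⟩
    obtain ⟨w, hwF, hwB, hwne⟩ := h1.exists
    have hwB' : ‖w‖ < B⁻¹ := by simpa [Metric.mem_ball, dist_zero_right] using hwB
    exact hnz _ (hinvmem w hwne hwB') (by rwa [hFeval w hwne] at hwF)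
  obtain ⟨n, hn⟩ := WithTop.ne_top_iff_exists.1 hordne
  obtain ⟨u, huan, hu0, hufac⟩ := (hFan.analyticOrderAt_eq_natCast (n := n)).1 hn.symm
  obtain ⟨δ, hδpos, hδ⟩ := Metric.eventually_nhds_iff.1 hufac
  set L : ℂ := u 0 / (starRingEnd ℂ) (u 0) with hLdef
  have hLnorm : ‖L‖ = 1 := by
    rw [hLdef, norm_div, RCLike.norm_conj, div_self (norm_ne_zero_iff.2 hu0)]
  have hQcoc : Tendsto Q (cocompact ℂ) (nhds L) := by
    have h1 : ContinuousAt u 0 := huan.continuousAt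
    have h2 : ContinuousAt (fun w : ℂ => (starRingEnd ℂ) (u ((starRingEnd ℂ) w))) 0 := by
      apply Complex.continuous_conj.continuousAt.comp
      have h3 : ContinuousAt (starRingEnd ℂ) (0 : ℂ) := Complex.continuous_conj.continuousAt
      have h4 : ContinuousAt u ((starRingEnd ℂ) (0 : ℂ)) := by rwa [map_zero]
      exact h4.comp h3
    have hφ : Tendsto (fun w : ℂ => u w / (starRingEnd ℂ) (u ((starRingEnd ℂ) w))) (nhds 0)
        (nhds L) := by
      have hd : ((fun w : ℂ => (starRingEnd ℂ) (u ((starRingEnd ℂ) w))) 0) ≠ 0 := by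
        simp only [map_zero]
        simpa using hu0
      have := h1.tendsto.div (h2.tendsto) (by simpa using hd)
      simpa [hLdef, Pi.div_def] using this
    have hinvt : Tendsto (fun z : ℂ => z⁻¹) (cocompact ℂ) (nhds 0) := by
      rw [← Metric.cobounded_eq_cocompact]
      exact Filter.tendsto_inv₀_cobounded
    refine Filter.Tendsto.congr' ?_ (hφ.comp hinvt)
    have hev : ∀ᶠ z : ℂ in cocompact ℂ, max B δ⁻¹ < ‖z‖ :=
      tendsto_norm_cocompact_atTop.eventually_gt_atTop _
    filter_upwards [hev] with z hz
    have hzB : B < ‖z‖ := lt_of_le_of_lt (le_max_left _ _) hz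
    have hzδ : δ⁻¹ < ‖z‖ := lt_of_le_of_lt (le_max_right _ _) hz
    have hz0 : z ≠ 0 := norm_pos_iff.1 (lt_trans hBpos hzB)
    have hzi : z⁻¹ ≠ 0 := inv_ne_zero hz0
    have hwδ : ‖z⁻¹‖ < δ := by
      rw [norm_inv]
      have := inv_strictAnti₀ (inv_pos.2 hδpos) hzδ
      rwa [inv_inv] at this
    have hfz : f z = F z⁻¹ := by rw [hFeval _ hzi, inv_inv]
    have hgz : g z = (starRingEnd ℂ) (F ((starRingEnd ℂ) (z⁻¹))) := by
      show (starRingEnd ℂ) (f ((starRingEnd ℂ) z)) = _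
      have hcne : (starRingEnd ℂ) (z⁻¹) ≠ 0 := by simpa using hzi
      rw [hFeval _ hcne, ← map_inv₀, inv_inv]
    have hF1 : F z⁻¹ = (z⁻¹) ^ n * u z⁻¹ := by
      have := hδ (y := z⁻¹) (by rwa [dist_zero_right])
      simpa using this
    have hF2 : F ((starRingEnd ℂ) (z⁻¹)) = ((starRingEnd ℂ) (z⁻¹)) ^ n * u ((starRingEnd ℂ) (z⁻¹)) := by
      have := hδ (y := (starRingEnd ℂ) (z⁻¹)) (by rw [dist_zero_right, RCLike.norm_conj]; exact hwδ)
      simpa using this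
    show u z⁻¹ / (starRingEnd ℂ) (u ((starRingEnd ℂ) (z⁻¹))) = Q z
    show _ = f z / g z
    rw [hfz, hgz, hF1, hF2, map_mul, map_pow, Complex.conj_conj]
    rw [mul_div_mul_left _ _ (pow_ne_zero n hzi)]
  have hbQ : ∀ z₀ ∈ S, Tendsto (fun z => ‖Q z‖) (nhdsWithin z₀ Sᶜ) (nhds 1) := by
    intro z₀ hz₀
    have hconjt : Tendsto (fun z : ℂ => (starRingEnd ℂ) z) (nhdsWithin z₀ Sᶜ)
        (nhdsWithin z₀ Sᶜ) := by
      have h1 : ContinuousWithinAt (fun z : ℂ => (starRingEnd ℂ) z) Sᶜ z₀ :=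
        Complex.continuous_conj.continuousWithinAt
      have h2 := h1.tendsto_nhdsWithin (fun z hz => hconjmem z hz)
      rwa [hconjS z₀ hz₀] at h2
    have h2 : Tendsto (fun z => ‖f ((starRingEnd ℂ) z)‖) (nhdsWithin z₀ Sᶜ) (nhds 1) :=
      (hbdry z₀ hz₀).comp hconjt
    have h3 := (hbdry z₀ hz₀).div h2 one_ne_zero
    rw [div_one] at h3
    apply h3.congr
    intro z
    show ‖f z‖ / ‖f ((starRingEnd ℂ) z)‖ = ‖Q z‖
    rw [← hgnorm z]
    exact (norm_div _ _).symm
  have hEqOn : ∀ c ∈ Sᶜ, IsMaxOn (norm ∘ Q) Sᶜ c → ∀ z ∈ Sᶜ, Q z = Q c := by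
    intro c hc hm z hz
    exact Complex.eqOn_of_isPreconnected_of_isMaxOn_norm hconn hopen hQd hc hm hz
  have hle1 : ∀ z ∈ Sᶜ, ‖Q z‖ ≤ 1 := by
    by_contra hcon
    push_neg at hcon
    obtain ⟨z₁, hz₁, hgt⟩ := hcon
    set ε := ‖Q z₁‖ with hεdef
    have hε1 : 1 < ε := hgt
    set V : Set ℂ := {z | z ∈ Sᶜ ∧ ε ≤ ‖Q z‖} with hVdef
    have hVsub : V ⊆ Sᶜ := fun z hz => hz.1
    have hz₁V : z₁ ∈ V := ⟨hz₁, le_refl _⟩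
    have hVclosed : IsClosed V := by
      rw [← closure_subset_iff_isClosed]
      intro z₀ hz₀
      have hnb : (nhdsWithin z₀ V).NeBot := mem_closure_iff_nhdsWithin_neBot.1 hz₀
      have hev : ∀ᶠ z in nhdsWithin z₀ V, ε ≤ ‖Q z‖ :=
        eventually_mem_nhdsWithin.mono (fun z hz => hz.2)
      by_cases hz₀S : z₀ ∈ S
      · exfalso
        have ht : Tendsto (fun z => ‖Q z‖) (nhdsWithin z₀ V) (nhds 1) :=
          (hbQ z₀ hz₀S).mono_left (nhdsWithin_mono z₀ hVsub)
        have := ge_of_tendsto ht hev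
        linarith
      · have hz₀c : z₀ ∈ Sᶜ := hz₀S
        have hcont : ContinuousAt (fun z => ‖Q z‖) z₀ :=
          (((hQd z₀ hz₀c).differentiableAt (hopen.mem_nhds hz₀c)).continuousAt).norm
        have ht : Tendsto (fun z => ‖Q z‖) (nhdsWithin z₀ V) (nhds ‖Q z₀‖) :=
          hcont.tendsto.mono_left nhdsWithin_le_nhds
        exact ⟨hz₀c, ge_of_tendsto ht hev⟩
    have hVbdd : Bornology.IsBounded V := by
      have hev : ∀ᶠ z : ℂ in cocompact ℂ, ‖Q z‖ < ε := by
        have := hQcoc.norm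
        rw [hLnorm] at this
        exact this.eventually_lt_const hε1
      obtain ⟨K, hK, hKsub⟩ := mem_cocompact.1 hev
      apply hK.isBounded.subset
      intro z hz
      by_contra hzK
      exact absurd hz.2 (not_le.2 (hKsub hzK))
    have hVcomp : IsCompact V := Metric.isCompact_of_isClosed_isBounded hVclosed hVbdd
    have hcontV : ContinuousOn (fun z => ‖Q z‖) V := (hQd.continuousOn.norm).mono hVsub
    obtain ⟨c, hcV, hcmax⟩ := hVcomp.exists_isMaxOn ⟨z₁, hz₁V⟩ hcontV
    have hmax : IsMaxOn (norm ∘ Q) Sᶜ c := by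
      intro z hz
      by_cases hzV : z ∈ V
      · exact hcmax hzV
      · have h1 : ‖Q z‖ < ε := not_le.1 (fun h => hzV ⟨hz, h⟩)
        have h2 : ε ≤ ‖Q c‖ := hcV.2
        exact le_trans h1.le h2
    have hcc := hEqOn c hcV.1 hmax 0 h0mem
    rw [hQ0] at hcc
    have h3 : ‖Q c‖ = 1 := by rw [← hcc]; simp
    have h4 := hcV.2
    rw [h3] at h4
    linarith
  have hmax0 : IsMaxOn (norm ∘ Q) Sᶜ 0 := by
    intro z hz
    show ‖Q z‖ ≤ ‖Q 0‖
    rw [hQ0, norm_one]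
    exact hle1 z hz
  have hQ1 : ∀ z ∈ Sᶜ, Q z = 1 := by
    intro z hz
    rw [hEqOn 0 h0mem hmax0 z hz, hQ0]
  have hfg : ∀ z ∈ Sᶜ, f ((starRingEnd ℂ) z) = (starRingEnd ℂ) (f z) := by
    intro z hz
    have h1 := hQ1 ((starRingEnd ℂ) z) (hconjmem z hz)
    have h2 : g ((starRingEnd ℂ) z) = (starRingEnd ℂ) (f z) := by
      show (starRingEnd ℂ) (f ((starRingEnd ℂ) ((starRingEnd ℂ) z))) = _
      rw [Complex.conj_conj]
    have h3 : f ((starRingEnd ℂ) z) / g ((starRingEnd ℂ) z) = 1 := h1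
    rw [h2] at h3
    have h4 : (starRingEnd ℂ) (f z) ≠ 0 := by
      simpa using hnz z hz
    exact (div_eq_one_iff_eq h4).1 h3
  have hreal : ∀ x : ℝ, (x : ℂ) ∈ Sᶜ → (f x).im = 0 := by
    intro x hx
    have h1 := hfg x hx
    rw [Complex.conj_ofReal] at h1
    exact Complex.conj_eq_iff_im.1 h1.symm
  refine ⟨hfg, hreal, ?_⟩
  intro x hx
  have hmem : (x : ℂ) ∈ Sᶜ := hmemcompl _ (by simpa using hx)
  have him := hreal x hmem
  refine ⟨him, ?_⟩
  have hcont : ContinuousOn (fun t : ℝ => (f t).re) (Set.Iic (0 : ℝ)) := by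
    apply Complex.continuous_re.comp_continuousOn
    apply (hhol.continuousOn).comp Complex.continuous_ofReal.continuousOn
    intro t ht
    exact hmemcompl _ (by simpa using ht)
  have hne' : ∀ t ∈ Set.Iic (0 : ℝ), (f t).re ≠ 0 := by
    intro t ht h0
    have hmem' : ((t : ℝ) : ℂ) ∈ Sᶜ := hmemcompl _ (by simpa using ht)
    have him' := hreal t hmem'
    exact hnz _ hmem' (Complex.ext h0 him')
  have hf0 : (f ((0 : ℝ) : ℂ)).re < 0 := by
    have h1 := hne' 0 (Set.mem_Iic.2 le_rfl)
    have h2 : (f ((0 : ℝ) : ℂ)).re ≤ 0 := by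
      simpa using hval.2
    exact lt_of_le_of_ne h2 h1
  by_contra hge
  push_neg at hge
  have hpos : 0 < (f x).re := lt_of_le_of_ne hge (Ne.symm (hne' x hx))
  have hsub : Set.Icc x 0 ⊆ Set.Iic (0 : ℝ) := fun t ht => ht.2
  have hIVT := intermediate_value_Icc' hx (hcont.mono hsub)
  have h0m : (0 : ℝ) ∈ Set.Icc ((f ((0 : ℝ) : ℂ)).re) ((f x).re) := ⟨hf0.le, hpos.le⟩
  obtain ⟨c, hc, hc0⟩ := hIVT h0m
  exact hne' c (hsub hc) hc0
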